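/- Let {x_{i_r}, x_{i_s}} (with r < s) be a deletion pair in a 0-Hecke word, i.e. the word x_{i_r}⋯x_{i_s} is not reduced but both x_{i_{r+1}}⋯x_{i_s} and x_{i_r}⋯x_{i_{s-1}} are reduced. Then the Demazure products satisfy w(x_{i_r}⋯x_{i_s}) = w(x_{i_{r+1}}⋯x_{i_s}) = w(x_{i_r}⋯x_{i_{s-1}}), and these are all distinct from w(x_{i_{r+1}}⋯x_{i_{s-1}}) (the word with both endpoints deleted). -/

import Mathlib

variable {B W : Type*} [Group W] {M : CoxeterMatrix B}

/-- The Demazure (0-Hecke) product of a word in the simple reflections. -/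
noncomputable def demazureProd (cs : CoxeterSystem M W) (ω : List B) : W :=
  ω.foldl (fun w i =>
    if cs.length (w * cs.simple i) = cs.length w + 1 then w * cs.simple i else w) 1

namespace DeletionPairAux

open CoxeterSystem List

variable (cs : CoxeterSystem M W)

open Classical in
/-- The basic involution on `W × ZMod 2` used to build the reflection representation. -/
noncomputable def etaFun (i : B) : W × ZMod 2 → W × ZMod 2 :=
  fun p => (cs.simple i * p.1 * cs.simple i, if p.1 = cs.simple i then p.2 + 1 else p.2)

lemma etaFun_involutive (i : B) : Function.Involutive (etaFun cs i) := by
  intro ⟨t, e⟩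
  classical
  simp only [etaFun]
  refine Prod.ext ?_ ?_
  · rw [show cs.simple i * (cs.simple i * t * cs.simple i) * cs.simple i
      = (cs.simple i * cs.simple i) * t * (cs.simple i * cs.simple i) by group,
      cs.simple_mul_simple_self, one_mul, mul_one]
  · have h : (cs.simple i * t * cs.simple i = cs.simple i) ↔ (t = cs.simple i) := by
      constructor
      · intro h
        have := congrArg (fun x => cs.simple i * x * cs.simple i) h
        simpa [show ∀ u : W, cs.simple i * (cs.simple i * u * cs.simple i) * cs.simple i
          = (cs.simple i * cs.simple i) * u * (cs.simple i * cs.simple i) from fun u => by group,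
          cs.simple_mul_simple_self] using this
      · rintro rfl; rw [cs.simple_mul_simple_self, one_mul]
    dsimp only
    split_ifs with h1 h2 h3 <;> simp_all [add_assoc, show (1+1:ZMod 2)=0 by decide]

/-- The involution as a permutation. -/
noncomputable def eta (i : B) : Equiv.Perm (W × ZMod 2) :=
  (etaFun_involutive cs i).toPerm

lemma eta_apply (i : B) (p : W × ZMod 2) : eta cs i p = etaFun cs i p := rfl

lemma simple_conj_pow (i j : B) (k : ℕ) :
    cs.simple j * (cs.simple i * cs.simple j) ^ k * cs.simple j
      = ((cs.simple i * cs.simple j) ^ k)⁻¹ := by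
  have h : cs.simple j * (cs.simple i * cs.simple j) * (cs.simple j)⁻¹
      = (cs.simple i * cs.simple j)⁻¹ := by
    rw [cs.inv_simple, mul_inv_rev, cs.inv_simple, cs.inv_simple]
    rw [show cs.simple j * (cs.simple i * cs.simple j) * cs.simple j
      = cs.simple j * cs.simple i * (cs.simple j * cs.simple j) by group,
      cs.simple_mul_simple_self, mul_one]
  calc cs.simple j * (cs.simple i * cs.simple j) ^ k * cs.simple j
      = cs.simple j * (cs.simple i * cs.simple j) ^ k * (cs.simple j)⁻¹ := by
        rw [cs.inv_simple]
    _ = (cs.simple j * (cs.simple i * cs.simple j) * (cs.simple j)⁻¹) ^ k := by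
        rw [conj_pow]
    _ = ((cs.simple i * cs.simple j) ^ k)⁻¹ := by rw [h, inv_pow]

lemma conj_eq_iff (g u v : W) : g * u * g⁻¹ = v ↔ u = g⁻¹ * v * g := by
  constructor
  · rintro rfl; group
  · rintro rfl; group

lemma conj_simple_eq_iff (a : B) (u v : W) :
    cs.simple a * u * cs.simple a = v ↔ u = cs.simple a * v * cs.simple a := by
  constructor
  · rintro rfl
    simp [mul_assoc, cs.simple_mul_simple_self, cs.simple_mul_simple_cancel_left]
  · rintro rfl
    simp [mul_assoc, cs.simple_mul_simple_self, cs.simple_mul_simple_cancel_left]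

open Classical in
lemma eta_mul_pow_apply (i j : B) (k : ℕ) (t : W) (e : ZMod 2) :
    ((eta cs i * eta cs j) ^ k) (t, e) =
      ((cs.simple i * cs.simple j) ^ k * t * ((cs.simple i * cs.simple j) ^ k)⁻¹,
       e + ∑ l ∈ Finset.range (2 * k),
         (if t = cs.simple j * (cs.simple i * cs.simple j) ^ l then (1 : ZMod 2) else 0)) := by
  classical
  set P : W := cs.simple i * cs.simple j with hP
  have hconj : ∀ m : ℕ, (P ^ m)⁻¹ * cs.simple j = cs.simple j * P ^ m := by
    intro m
    have h := simple_conj_pow cs i j m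
    rw [← hP] at h
    rw [← h, mul_assoc, cs.simple_mul_simple_self, mul_one]
  clear_value P
  induction k with
  | zero => simp
  | succ k ih =>
    rw [pow_succ', Equiv.Perm.mul_apply, ih]
    rw [Equiv.Perm.mul_apply, eta_apply, eta_apply]
    simp only [etaFun]
    have hc1 : (P ^ k * t * (P ^ k)⁻¹ = cs.simple j) ↔ t = cs.simple j * P ^ (2 * k) := by
      rw [conj_eq_iff]
      rw [hconj k, mul_assoc, ← pow_add, two_mul]
    have hc2 : (cs.simple j * (P ^ k * t * (P ^ k)⁻¹) * cs.simple j = cs.simple i)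
        ↔ t = cs.simple j * P ^ (2 * k + 1) := by
      rw [conj_simple_eq_iff, conj_eq_iff]
      have hval : (P ^ k)⁻¹ * (cs.simple j * cs.simple i * cs.simple j) * P ^ k
          = cs.simple j * P ^ (2 * k + 1) := by
        have h1 : (P ^ k)⁻¹ * (cs.simple j * cs.simple i * cs.simple j) * P ^ k
            = ((P ^ k)⁻¹ * cs.simple j) * (cs.simple i * cs.simple j * P ^ k) := by group
        rw [h1, hconj k, ← hP]
        rw [show cs.simple j * P ^ k * (P * P ^ k) = cs.simple j * (P ^ k * P ^ k * P) by group]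
        rw [← pow_add, ← pow_succ, two_mul]
      rw [hval]
    refine Prod.ext ?_ ?_
    · dsimp only
      rw [pow_succ' (a := P), mul_inv_rev, hP]
      group
      simp [zpow_neg_one, cs.inv_simple]
    · dsimp only
      simp only [hc1, hc2]
      rw [show 2 * (k + 1) = (2 * k) + 1 + 1 by ring, Finset.sum_range_succ, Finset.sum_range_succ]
      split_ifs <;> ring

lemma eta_liftable : CoxeterMatrix.IsLiftable M (eta cs) := by
  classical
  intro i j
  refine Equiv.ext fun p => ?_
  obtain ⟨t, e⟩ := p
  rw [eta_mul_pow_apply]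
  have hpow : (cs.simple i * cs.simple j) ^ M i j = 1 := cs.simple_mul_simple_pow i j
  have hsum : ∑ l ∈ Finset.range (2 * M i j),
      (if t = cs.simple j * (cs.simple i * cs.simple j) ^ l then (1 : ZMod 2) else 0) = 0 := by
    rw [two_mul, Finset.sum_range_add]
    have : ∀ l, (cs.simple i * cs.simple j) ^ (M i j + l) = (cs.simple i * cs.simple j) ^ l := by
      intro l; rw [pow_add, hpow, one_mul]
    simp only [this]
    rw [← two_mul, show (2 : ZMod 2) = 0 by decide, zero_mul]
  rw [hpow, hsum]
  simp

/-- The reflection representation homomorphism `W →* Perm (W × ZMod 2)`. -/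
noncomputable def phi : W →* Equiv.Perm (W × ZMod 2) :=
  cs.lift ⟨eta cs, eta_liftable cs⟩

lemma phi_simple (i : B) : phi cs (cs.simple i) = eta cs i :=
  cs.lift_apply_simple (eta_liftable cs) i

open Classical in
lemma phi_wordProd (ω : List B) (t : W) (e : ZMod 2) :
    phi cs (cs.wordProd ω) (t, e) =
      (cs.wordProd ω * t * (cs.wordProd ω)⁻¹,
       e + ((cs.rightInvSeq ω).map (fun u => if t = u then (1 : ZMod 2) else 0)).sum) := by
  classical
  induction ω with
  | nil => simp [cs.wordProd_nil]
  | cons a ω ih =>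
    rw [cs.wordProd_cons, map_mul, Equiv.Perm.mul_apply, ih, phi_simple, eta_apply]
    simp only [etaFun]
    have hris : cs.rightInvSeq (a :: ω)
        = ((cs.wordProd ω)⁻¹ * cs.simple a * cs.wordProd ω) :: cs.rightInvSeq ω := rfl
    rw [hris]
    refine Prod.ext ?_ ?_
    · dsimp only
      rw [mul_inv_rev, cs.inv_simple]
      group
    · dsimp only
      have hcond : (cs.wordProd ω * t * (cs.wordProd ω)⁻¹ = cs.simple a)
          ↔ t = (cs.wordProd ω)⁻¹ * cs.simple a * cs.wordProd ω := by
        rw [conj_eq_iff]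
      simp only [hcond, List.map_cons, List.sum_cons]
      split_ifs <;> ring

set_option linter.unusedSectionVars false in
open Classical in
lemma sum_indicator_of_nodup (t : W) (L : List W) (h : L.Nodup) :
    (L.map (fun u => if t = u then (1 : ZMod 2) else 0)).sum
      = if t ∈ L then 1 else 0 := by
  classical
  induction L with
  | nil => simp
  | cons a L ih =>
    rw [List.nodup_cons] at h
    obtain ⟨ha, hL⟩ := h
    rw [List.map_cons, List.sum_cons, ih hL]
    by_cases hta : t = a
    · subst hta
      rw [if_pos rfl, if_neg ha, if_pos (by simp), add_zero]
    · rw [if_neg hta, zero_add]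
      by_cases h2 : t ∈ L
      · rw [if_pos h2, if_pos (by simp [h2])]
      · rw [if_neg h2, if_neg (by simp [hta, h2])]

lemma simple_mem_rightInvSeq (ω : List B) (hred : cs.IsReduced ω) (j : B)
    (hlt : cs.length (cs.wordProd ω * cs.simple j) < cs.length (cs.wordProd ω)) :
    cs.simple j ∈ cs.rightInvSeq ω := by
  classical
  by_contra hmem
  obtain ⟨σ, hσlen, hσ⟩ := cs.exists_reduced_word (cs.wordProd ω * cs.simple j)
  have hw : cs.wordProd (σ ++ [j]) = cs.wordProd ω := by
    rw [cs.wordProd_append, ← hσ]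
    have : cs.wordProd [j] = cs.simple j := by
      rw [cs.wordProd_cons, cs.wordProd_nil, mul_one]
    rw [this, mul_assoc, cs.simple_mul_simple_self, mul_one]
  have hlen1 : cs.length (cs.wordProd ω) = cs.length (cs.wordProd ω * cs.simple j) + 1 := by
    rcases cs.length_mul_simple (cs.wordProd ω) j with h | h <;> omega
  have hredσ : cs.IsReduced (σ ++ [j]) := by
    unfold CoxeterSystem.IsReduced
    rw [hw, List.length_append, List.length_singleton, ← hσlen.eq, ← hσ, hlen1]
  have hmem' : cs.simple j ∈ cs.rightInvSeq (σ ++ [j]) := by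
    rw [← List.concat_eq_append, cs.rightInvSeq_concat]
    simp
  have e1 := phi_wordProd cs ω (cs.simple j) 0
  have e2 := phi_wordProd cs (σ ++ [j]) (cs.simple j) 0
  rw [hw] at e2
  rw [sum_indicator_of_nodup _ _ hred.nodup_rightInvSeq, if_neg hmem] at e1
  rw [sum_indicator_of_nodup _ _ hredσ.nodup_rightInvSeq, if_pos hmem'] at e2
  have h01 := congrArg Prod.snd (e1.symm.trans e2)
  simp only [zero_add] at h01
  exact absurd h01 (by decide)


/-- The exchange property for a simple reflection on the left. -/
lemma exchange (ω : List B) (hred : cs.IsReduced ω) (i : B)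
    (hlt : cs.length (cs.simple i * cs.wordProd ω) < cs.length (cs.wordProd ω)) :
    ∃ k < ω.length, cs.simple i * cs.wordProd ω = cs.wordProd (ω.eraseIdx k) := by
  have hmem : cs.simple i ∈ cs.leftInvSeq ω := by
    have hrev : cs.IsReduced ω.reverse := (cs.isReduced_reverse_iff ω).mpr hred
    have hlt' : cs.length (cs.wordProd ω.reverse * cs.simple i)
        < cs.length (cs.wordProd ω.reverse) := by
      rw [cs.wordProd_reverse]
      rw [← cs.length_inv ((cs.wordProd ω)⁻¹ * cs.simple i), mul_inv_rev, inv_inv, cs.inv_simple,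
        cs.length_inv (cs.wordProd ω)]
      exact hlt
    have := simple_mem_rightInvSeq cs ω.reverse hrev i hlt'
    rw [cs.rightInvSeq_reverse] at this
    exact List.mem_reverse.mp this
  obtain ⟨k, hk, hget⟩ := List.getElem_of_mem hmem
  have hk' : k < ω.length := by rwa [cs.length_leftInvSeq] at hk
  refine ⟨k, hk', ?_⟩
  have hgetD : (cs.leftInvSeq ω).getD k 1 = cs.simple i := by
    rw [List.getD_eq_getElem _ _ hk, hget]
  rw [← hgetD, cs.getD_leftInvSeq_mul_wordProd]

/-- On a reduced word, the Demazure product coincides with the word product. -/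
lemma demazureProd_of_isReduced (σ : List B) (h : cs.IsReduced σ) :
    demazureProd cs σ = cs.wordProd σ := by
  induction σ using List.reverseRecOn with
  | nil => simp [demazureProd, cs.wordProd_nil]
  | append_singleton ρ j ih =>
    have hlen : cs.length (cs.wordProd (ρ ++ [j])) = ρ.length + 1 := by
      have := h; unfold CoxeterSystem.IsReduced at this
      simpa using this
    have hprod : cs.wordProd (ρ ++ [j]) = cs.wordProd ρ * cs.simple j := by
      rw [cs.wordProd_append, cs.wordProd_cons, cs.wordProd_nil, mul_one]
    have hρ : cs.IsReduced ρ := by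
      have h1 := cs.length_wordProd_le ρ
      have h2 := cs.length_mul_simple (cs.wordProd ρ) j
      rw [hprod] at hlen
      unfold CoxeterSystem.IsReduced
      omega
    have hcond : cs.length (cs.wordProd ρ * cs.simple j) = cs.length (cs.wordProd ρ) + 1 := by
      rw [hρ, ← hprod, hlen]
    unfold demazureProd at ih ⊢
    rw [List.foldl_append, List.foldl_cons, List.foldl_nil, ih hρ, if_pos hcond, hprod]

end DeletionPairAux

open DeletionPairAux in
/-- If the first and last letters of a word `ω` form a deletion pair
(`ω` is not reduced, but deleting either the first or the last letter yields a reduced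
word), then the Demazure products of `ω`, of `ω` minus its first letter, and of `ω` minus
its last letter all agree, and they differ from the Demazure product of `ω` with both
endpoints deleted. -/
theorem demazureProd_deletionPair (cs : CoxeterSystem M W) (ω : List B)
    (hlen : 2 ≤ ω.length)
    (hnred : ¬ cs.IsReduced ω)
    (htail : cs.IsReduced ω.tail)
    (hdrop : cs.IsReduced ω.dropLast) :
    demazureProd cs ω = demazureProd cs ω.tail ∧
    demazureProd cs ω = demazureProd cs ω.dropLast ∧
    demazureProd cs ω ≠ demazureProd cs ω.tail.dropLast := by
  classical
  obtain ⟨i, τ, rfl⟩ : ∃ i τ, ω = i :: τ := by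
    cases ω with
    | nil => simp at hlen
    | cons a l => exact ⟨a, l, rfl⟩
  obtain ⟨σ, j, rfl⟩ : ∃ σ j, τ = σ ++ [j] := by
    rcases τ.eq_nil_or_concat with h | ⟨L, b, h⟩
    · subst h; simp at hlen
    · exact ⟨L, b, by simpa [List.concat_eq_append] using h⟩
  have htail' : (i :: (σ ++ [j])).tail = σ ++ [j] := rfl
  have hdrop' : (i :: (σ ++ [j])).dropLast = i :: σ := by
    rw [show i :: (σ ++ [j]) = (i :: σ) ++ [j] by simp, List.dropLast_concat]
  rw [htail'] at htail
  rw [hdrop'] at hdrop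
  set m := σ.length with hm
  have h1 : cs.length (cs.wordProd (σ ++ [j])) = m + 1 := by
    have := htail; unfold CoxeterSystem.IsReduced at this; simpa using this
  have h2 : cs.length (cs.wordProd (i :: σ)) = m + 1 := by
    have := hdrop; unfold CoxeterSystem.IsReduced at this; simpa using this
  have hωprod : cs.wordProd (i :: (σ ++ [j])) = cs.wordProd (i :: σ) * cs.simple j := by
    rw [show i :: (σ ++ [j]) = (i :: σ) ++ [j] by simp, cs.wordProd_append,
      cs.wordProd_singleton]
  have h3 : cs.length (cs.wordProd (i :: (σ ++ [j]))) ≠ m + 2 := by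
    intro h
    exact hnred (by unfold CoxeterSystem.IsReduced; simpa using h)
  have hωlen : cs.length (cs.wordProd (i :: (σ ++ [j]))) = m := by
    rcases cs.length_mul_simple (cs.wordProd (i :: σ)) j with h | h <;>
      rw [hωprod] <;> rw [hωprod] at h3 <;> omega
  -- exchange
  have hcons : cs.wordProd (i :: (σ ++ [j])) = cs.simple i * cs.wordProd (σ ++ [j]) :=
    cs.wordProd_cons i (σ ++ [j])
  obtain ⟨k, hk, hex⟩ := exchange cs (σ ++ [j]) htail i (by rw [← hcons, hωlen, h1]; omega)
  have hkey : cs.wordProd (σ ++ [j]) = cs.wordProd (i :: σ) := by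
    rcases lt_or_ge k m with hkm | hkm
    · exfalso
      rw [List.eraseIdx_append_of_lt_length hkm] at hex
      have hδ : cs.wordProd (i :: σ) = cs.wordProd (σ.eraseIdx k) := by
        have : cs.wordProd (i :: σ) * cs.simple j = cs.wordProd (σ.eraseIdx k) * cs.simple j := by
          rw [← hωprod, hcons, hex, cs.wordProd_append, cs.wordProd_cons, cs.wordProd_nil, mul_one]
        exact mul_right_cancel this
      have hle := cs.length_wordProd_le (σ.eraseIdx k)
      rw [← hδ, h2] at hle
      rw [List.length_eraseIdx_of_lt hkm] at hle
      omega
    · have hkm' : k = m := by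
        have : k < m + 1 := by simpa using hk
        omega
      subst hkm'
      rw [List.eraseIdx_append_of_length_le (le_refl m), show m - m = 0 by omega] at hex
      simp only [List.eraseIdx_cons_zero, List.append_nil] at hex
      rw [cs.wordProd_cons, ← hex, ← mul_assoc, cs.simple_mul_simple_self, one_mul]
  -- Demazure products
  have hDδ : demazureProd cs (i :: σ) = cs.wordProd (i :: σ) :=
    demazureProd_of_isReduced cs _ hdrop
  have hDτ : demazureProd cs (σ ++ [j]) = cs.wordProd (σ ++ [j]) :=
    demazureProd_of_isReduced cs _ htail
  have hDω : demazureProd cs (i :: (σ ++ [j])) = cs.wordProd (i :: σ) := by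
    unfold demazureProd
    rw [show i :: (σ ++ [j]) = (i :: σ) ++ [j] by simp, List.foldl_append,
      List.foldl_cons, List.foldl_nil]
    have hD : List.foldl (fun w i' =>
        if cs.length (w * cs.simple i') = cs.length w + 1 then w * cs.simple i' else w)
        1 (i :: σ) = cs.wordProd (i :: σ) := hDδ
    rw [hD, if_neg ?_]
    rw [← hωprod, hωlen, h2]
    omega
  have hσred : cs.IsReduced σ := by
    have := htail.take m
    rwa [List.take_left] at this
  refine ⟨?_, ?_, ?_⟩
  · rw [htail', hDω, hDτ, hkey]
  · rw [hdrop', hDω, hDδ]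
  · rw [htail', show (σ ++ [j]).dropLast = σ from List.dropLast_concat]
    rw [hDω, demazureProd_of_isReduced cs _ hσred]
    intro h
    have := cs.length_wordProd_le σ
    rw [← h, h2] at this
    omega
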